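/- arXiv:1010.5689 — 4 statements merged into one kernel-verified Lean document; each statement's English description precedes it below -/
import Mathlib

section
/- Let α ∈ L¹(ℝ), let w be C¹ with w(0) = 0, let 1 ≤ p < ∞, and let u ∈ L^p(ℝ) ∩ L^∞(ℝ) with ‖u‖_∞ ≤ R. With M(R) = max_{|η| ≤ 2R} |w'(η)| and (Ku)(x) = ∫_ℝ α(y - x) w(u(y) - u(x)) dy, one has Ku ∈ L^p(ℝ) with ‖Ku‖_{L^p} ≤ 2 M(R) ‖α‖_{L¹} ‖u‖_{L^p}. -/
open Set MeasureTheory ENNReal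

lemma aux_jensen {q : ℝ} (hq : 1 ≤ q) {a f : ℝ → ℝ≥0∞}
    (ha : AEMeasurable a volume) (hf : AEMeasurable f volume) :
    (∫⁻ z, a z * f z) ^ q ≤ (∫⁻ z, a z) ^ (q - 1) * ∫⁻ z, a z * f z ^ q := by
  rcases eq_or_lt_of_le hq with h1 | h1
  · simp [← h1]
  · have hq0 : (0:ℝ) < q := lt_trans one_pos h1
    set r := Real.conjExponent q with hr
    have hqr : q.HolderConjugate r := Real.HolderConjugate.conjExponent h1
    have hrq : r.HolderConjugate q := hqr.symm
    have hr0 : (0:ℝ) < r := hrq.pos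
    have key : (∫⁻ z, a z * f z) ≤
        (∫⁻ z, a z) ^ (1/r) * (∫⁻ z, a z * f z ^ q) ^ (1/q) := by
      have h := ENNReal.lintegral_mul_le_Lp_mul_Lq volume hrq
        (ha.pow_const (1/r)) ((ha.pow_const (1/q)).mul hf)
      have e1 : ∀ z, a z ^ (1/r) * (a z ^ (1/q) * f z) = a z * f z := by
        intro z
        rw [← mul_assoc, ← ENNReal.rpow_add_of_nonneg _ _
          (one_div_nonneg.mpr hr0.le) (one_div_nonneg.mpr hq0.le),
          one_div, one_div, hrq.inv_add_inv_eq_one, ENNReal.rpow_one]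
      have e2 : ∀ z, (a z ^ (1/r)) ^ r = a z := by
        intro z
        rw [← ENNReal.rpow_mul, one_div, inv_mul_cancel₀ (ne_of_gt hr0), ENNReal.rpow_one]
      have e3 : ∀ z, (a z ^ (1/q) * f z) ^ q = a z * f z ^ q := by
        intro z
        rw [ENNReal.mul_rpow_of_nonneg _ _ hq0.le, ← ENNReal.rpow_mul, one_div,
          inv_mul_cancel₀ (ne_of_gt hq0), ENNReal.rpow_one]
      calc (∫⁻ z, a z * f z) = ∫⁻ z, a z ^ (1/r) * (a z ^ (1/q) * f z) := by
              simp_rw [e1]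
        _ ≤ _ := h
        _ = (∫⁻ z, a z) ^ (1/r) * (∫⁻ z, a z * f z ^ q) ^ (1/q) := by
              simp only [Pi.pow_apply, Pi.mul_apply, e2, e3]
    calc (∫⁻ z, a z * f z) ^ q
        ≤ ((∫⁻ z, a z) ^ (1/r) * (∫⁻ z, a z * f z ^ q) ^ (1/q)) ^ q :=
          ENNReal.rpow_le_rpow key hq0.le
      _ = (∫⁻ z, a z) ^ (q - 1) * ∫⁻ z, a z * f z ^ q := by
          have e4 : 1/r * q = q - 1 := by
            have h := hrq.inv_add_inv_eq_one
            have : (1:ℝ)/r = 1 - 1/q := by rw [one_div, one_div]; linarith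
            rw [this]; field_simp
          have e5 : 1/q * q = 1 := by field_simp
          rw [ENNReal.mul_rpow_of_nonneg _ _ hq0.le, ← ENNReal.rpow_mul, ← ENNReal.rpow_mul,
            e4, e5, ENNReal.rpow_one]

/-- M(R) = max of |w'| on [-2R, 2R]. -/
noncomputable def Mmax (w : ℝ → ℝ) (R : ℝ) : ℝ :=
  sSup ((fun η => |deriv w η|) '' Icc (-(2*R)) (2*R))

theorem stmt3 (α w : ℝ → ℝ) (hα : Integrable α) (hw : ContDiff ℝ 1 w) (hw0 : w 0 = 0)
    (p : ℝ≥0∞) (hp1 : 1 ≤ p) (hp2 : p ≠ ⊤)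
    (R : ℝ) (hR : 0 < R) (u : ℝ → ℝ)
    (hup : MemLp u p) (huinf : MemLp u ⊤) (hub : ∀ x, |u x| ≤ R) :
    MemLp (fun x => ∫ y, α (y - x) * w (u y - u x)) p ∧
    eLpNorm (fun x => ∫ y, α (y - x) * w (u y - u x)) p volume ≤
      ENNReal.ofReal (2 * Mmax w R * (∫ y, |α y|)) * eLpNorm u p volume := by
  have hp0 : p ≠ 0 := (lt_of_lt_of_le zero_lt_one hp1).ne'
  set q : ℝ := p.toReal with hqdef
  have hq1 : (1:ℝ) ≤ q := by
    rw [← ENNReal.toReal_one]; exact ENNReal.toReal_mono hp2 hp1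
  have hq0 : (0:ℝ) < q := lt_of_lt_of_le one_pos hq1
  -- facts about M
  set M := Mmax w R with hMdef
  have hderiv_cont : Continuous (deriv w) := hw.continuous_deriv le_rfl
  have hbdd : BddAbove ((fun η => |deriv w η|) '' Icc (-(2*R)) (2*R)) :=
    (isCompact_Icc.image (continuous_abs.comp hderiv_cont)).bddAbove
  have hmem0 : (0:ℝ) ∈ Icc (-(2*R)) (2*R) := by constructor <;> nlinarith
  have hM0 : 0 ≤ M := le_trans (abs_nonneg _) (le_csSup hbdd ⟨0, hmem0, rfl⟩)
  have hMb : ∀ t, |t| ≤ 2*R → |w t| ≤ M * |t| := by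
    intro t ht
    have hts : t ∈ Icc (-(2*R)) (2*R) := by
      rcases abs_le.mp ht with ⟨h1, h2⟩; exact ⟨h1, h2⟩
    have := Convex.norm_image_sub_le_of_norm_deriv_le (f := w) (s := Icc (-(2*R)) (2*R))
      (fun x _ => hw.differentiable one_ne_zero x)
      (fun x hx => by
        rw [Real.norm_eq_abs]; exact le_csSup hbdd ⟨x, hx, rfl⟩)
      (convex_Icc _ _) hmem0 hts
    simpa [hw0, Real.norm_eq_abs, hMdef, Mmax] using this
  have wbound : ∀ a b : ℝ, |a| ≤ R → |b| ≤ R → |w (a - b)| ≤ M * (|a| + |b|) := by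
    intro a b ha hb
    have h1 : |a - b| ≤ |a| + |b| := abs_sub a b
    have h2 : |a - b| ≤ 2 * R := by linarith
    calc |w (a - b)| ≤ M * |a - b| := hMb _ h2
      _ ≤ M * (|a| + |b|) := by nlinarith
  -- measurable representatives
  set αm := hα.1.mk α with hαmdef
  have hαm : StronglyMeasurable αm := hα.1.stronglyMeasurable_mk
  have hαe : α =ᵐ[volume] αm := hα.1.ae_eq_mk
  set um := hup.1.mk u with humdef
  have hum : StronglyMeasurable um := hup.1.stronglyMeasurable_mk
  have hue : u =ᵐ[volume] um := hup.1.ae_eq_mk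
  -- translation of a.e. equalities
  have htrans : ∀ (x : ℝ) (g g' : ℝ → ℝ), g =ᵐ[volume] g' →
      (fun y => g (y - x)) =ᵐ[volume] fun y => g' (y - x) := by
    intro x g g' hgg'
    have hmp : MeasurePreserving (fun y : ℝ => y - x) volume volume := by
      simpa [sub_eq_add_neg] using measurePreserving_add_right volume (-x)
    exact ae_eq_comp hmp.measurable.aemeasurable (by rwa [hmp.map_eq])
  -- ennreal versions
  set a : ℝ → ℝ≥0∞ := fun z => (‖αm z‖₊ : ℝ≥0∞) with hadef
  set v : ℝ → ℝ≥0∞ := fun x => (‖um x‖₊ : ℝ≥0∞) with hvdef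
  have ha : Measurable a := hαm.measurable.enorm
  have hv : Measurable v := hum.measurable.enorm
  set A : ℝ≥0∞ := ∫⁻ z, a z with hAdef
  have hAeq : A = ENNReal.ofReal (∫ y, |α y|) := by
    have h1 : ENNReal.ofReal (∫ y, ‖α y‖) = ∫⁻ y, (‖α y‖₊ : ℝ≥0∞) :=
      ofReal_integral_norm_eq_lintegral_enorm hα
    have h2 : (∫⁻ y, (‖α y‖₊ : ℝ≥0∞)) = A := by
      apply lintegral_congr_ae
      filter_upwards [hαe] with z hz
      simp [hadef, hz]
    rw [← h2, ← h1]
    congr 1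
  have hAtop : A ≠ ⊤ := by
    rw [hAeq]; exact ENNReal.ofReal_ne_top
  set eM : ℝ≥0∞ := ENNReal.ofReal M with heMdef
  -- the measurable version of K
  set K' : ℝ → ℝ := fun x => ∫ y, αm (y - x) * w (um y - um x) with hK'def
  have hKK' : (fun x => ∫ y, α (y - x) * w (u y - u x)) =ᵐ[volume] K' := by
    filter_upwards [hue] with x hx
    apply integral_congr_ae
    filter_upwards [htrans x α αm hαe, hue] with y h1 h2
    rw [h1, h2, hx]
  have hK'm : AEStronglyMeasurable K' volume := by
    have hj : StronglyMeasurable fun (xy : ℝ × ℝ) =>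
        αm (xy.2 - xy.1) * w (um xy.2 - um xy.1) :=
      Measurable.stronglyMeasurable
        ((hαm.measurable.comp (measurable_snd.sub measurable_fst)).mul
          ((hw.continuous.measurable).comp
            ((hum.measurable.comp measurable_snd).sub (hum.measurable.comp measurable_fst))))
    exact hj.integral_prod_right'.aestronglyMeasurable
  -- a.e. bounds
  have hubm : ∀ᵐ x ∂(volume : Measure ℝ), |um x| ≤ R := by
    filter_upwards [hue] with x hx
    rw [← hx]; exact hub x
  set G : ℝ → ℝ≥0∞ := fun x => ∫⁻ y, a (y - x) * v y with hGdef
  have hGm : Measurable G := by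
    apply Measurable.lintegral_prod_right'
      (f := fun (xy : ℝ × ℝ) => a (xy.2 - xy.1) * v xy.2)
    exact (ha.comp (measurable_snd.sub measurable_fst)).mul (hv.comp measurable_snd)
  -- pointwise estimate
  have hptwise : ∀ᵐ x ∂(volume : Measure ℝ),
      (‖K' x‖₊ : ℝ≥0∞) ≤ eM * (G x + A * v x) := by
    filter_upwards [hubm] with x hx
    calc (‖K' x‖₊ : ℝ≥0∞) ≤ ∫⁻ y, ‖αm (y - x) * w (um y - um x)‖₊ :=
          enorm_integral_le_lintegral_enorm _
      _ ≤ ∫⁻ y, a (y - x) * (eM * (v y + v x)) := by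
          apply lintegral_mono_ae
          filter_upwards [hubm] with y hy
          rw [nnnorm_mul, ENNReal.coe_mul]
          apply mul_le_mul_right
          calc (‖w (um y - um x)‖₊ : ℝ≥0∞) = ENNReal.ofReal |w (um y - um x)| := by
                rw [← enorm_eq_nnnorm, ← ofReal_norm, Real.norm_eq_abs]
            _ ≤ ENNReal.ofReal (M * (|um y| + |um x|)) :=
                ENNReal.ofReal_le_ofReal (wbound _ _ hy hx)
            _ = eM * (ENNReal.ofReal |um y| + ENNReal.ofReal |um x|) := by
                rw [ENNReal.ofReal_mul hM0,
                  ENNReal.ofReal_add (abs_nonneg _) (abs_nonneg _)]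
            _ = eM * (v y + v x) := by
                have hvof : ∀ t : ℝ, ENNReal.ofReal |um t| = v t := by
                  intro t
                  simp only [hvdef]
                  rw [← Real.norm_eq_abs, ofReal_norm, enorm_eq_nnnorm]
                rw [hvof y, hvof x]
      _ = eM * (G x + A * v x) := by
          have e1 : ∀ y, a (y - x) * (eM * (v y + v x)) =
              eM * (a (y - x) * v y) + eM * (a (y - x) * v x) := by
            intro y; ring
          simp_rw [e1]
          rw [lintegral_add_left (by fun_prop), lintegral_const_mul _ (by fun_prop),
            lintegral_const_mul _ (by fun_prop), lintegral_mul_const _ (by fun_prop),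
            lintegral_sub_right_eq_self a x]
          ring
  -- the convolution estimate for G
  have hGq : ∫⁻ x, G x ^ q ≤ A ^ q * ∫⁻ x, v x ^ q := by
    have hGx : ∀ x, G x = ∫⁻ z, a z * v (z + x) := by
      intro x
      have := lintegral_sub_right_eq_self (μ := (volume : Measure ℝ)) (fun z => a z * v (z + x)) x
      rw [hGdef]
      rw [← this]
      apply lintegral_congr
      intro y
      simp [sub_add_cancel]
    have hjen : ∀ x, G x ^ q ≤ A ^ (q - 1) * ∫⁻ z, a z * v (z + x) ^ q := by
      intro x
      rw [hGx x]
      exact aux_jensen hq1 ha.aemeasurable ((hv.comp (measurable_add_const x)).aemeasurable)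
    calc ∫⁻ x, G x ^ q ≤ ∫⁻ x, A ^ (q - 1) * ∫⁻ z, a z * v (z + x) ^ q :=
          lintegral_mono hjen
      _ = A ^ (q - 1) * ∫⁻ x, ∫⁻ z, a z * v (z + x) ^ q :=
          lintegral_const_mul' _ _ (ENNReal.rpow_ne_top_of_nonneg (by linarith) hAtop)
      _ = A ^ (q - 1) * ∫⁻ z, ∫⁻ x, a z * v (z + x) ^ q := by
          rw [lintegral_lintegral_swap]
          apply Measurable.aemeasurable
          exact (ha.comp measurable_snd).mul
            (((hv.comp (measurable_snd.add measurable_fst)).pow_const _))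
      _ = A ^ (q - 1) * ∫⁻ z, a z * ∫⁻ x, v (z + x) ^ q := by
          congr 1
          apply lintegral_congr
          intro z
          rw [lintegral_const_mul _ (by fun_prop)]
      _ = A ^ (q - 1) * (A * ∫⁻ x, v x ^ q) := by
          congr 1
          have : ∀ z : ℝ, (∫⁻ x, v (z + x) ^ q) = ∫⁻ x, v x ^ q := fun z =>
            lintegral_add_left_eq_self (μ := (volume : Measure ℝ)) (fun x => v x ^ q) z
          simp_rw [this]
          rw [lintegral_mul_const _ ha]
      _ = A ^ q * ∫⁻ x, v x ^ q := by
          rw [← mul_assoc]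
          congr 1
          nth_rewrite 2 [← ENNReal.rpow_one A]
          rw [← ENNReal.rpow_add_of_nonneg _ _ (by linarith) zero_le_one]
          norm_num
  -- eLpNorm of u
  have hNu : eLpNorm u p volume = (∫⁻ x, v x ^ q) ^ (1/q) := by
    rw [eLpNorm_eq_lintegral_rpow_enorm_toReal hp0 hp2]
    congr 1
    apply lintegral_congr_ae
    filter_upwards [hue] with x hx
    simp [hvdef, hx]; rfl
  -- main estimate
  have hmain : eLpNorm K' p volume ≤ (2 * eM * A) * eLpNorm u p volume := by
    rw [eLpNorm_eq_lintegral_rpow_enorm_toReal hp0 hp2, hNu]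
    calc (∫⁻ x, (‖K' x‖₊ : ℝ≥0∞) ^ q) ^ (1/q)
        ≤ (∫⁻ x, (eM * (G x + A * v x)) ^ q) ^ (1/q) := by
          apply ENNReal.rpow_le_rpow _ (by positivity)
          apply lintegral_mono_ae
          filter_upwards [hptwise] with x hx
          exact ENNReal.rpow_le_rpow hx hq0.le
      _ = eM * (∫⁻ x, (G x + A * v x) ^ q) ^ (1/q) := by
          simp_rw [ENNReal.mul_rpow_of_nonneg _ _ hq0.le]
          rw [lintegral_const_mul' _ _ (ENNReal.rpow_ne_top_of_nonneg hq0.le ofReal_ne_top),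
            ENNReal.mul_rpow_of_nonneg _ _ (by positivity), ← ENNReal.rpow_mul,
            mul_one_div_cancel hq0.ne', ENNReal.rpow_one]
      _ ≤ eM * ((∫⁻ x, G x ^ q) ^ (1/q) + (∫⁻ x, (A * v x) ^ q) ^ (1/q)) := by
          apply mul_le_mul_right
          have := ENNReal.lintegral_Lp_add_le (μ := (volume : Measure ℝ))
            hGm.aemeasurable ((hv.const_mul A).aemeasurable) hq1
          simpa [Pi.add_apply] using this
      _ ≤ eM * (A * (∫⁻ x, v x ^ q) ^ (1/q) + A * (∫⁻ x, v x ^ q) ^ (1/q)) := by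
          apply mul_le_mul_right
          apply add_le_add
          · calc (∫⁻ x, G x ^ q) ^ (1/q) ≤ (A ^ q * ∫⁻ x, v x ^ q) ^ (1/q) :=
                ENNReal.rpow_le_rpow hGq (by positivity)
              _ = A * (∫⁻ x, v x ^ q) ^ (1/q) := by
                rw [ENNReal.mul_rpow_of_nonneg _ _ (by positivity), ← ENNReal.rpow_mul,
                  mul_one_div_cancel hq0.ne', ENNReal.rpow_one]
          · simp_rw [ENNReal.mul_rpow_of_nonneg _ _ hq0.le]
            rw [lintegral_const_mul' _ _ (ENNReal.rpow_ne_top_of_nonneg hq0.le hAtop),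
              ENNReal.mul_rpow_of_nonneg _ _ (by positivity), ← ENNReal.rpow_mul,
              mul_one_div_cancel hq0.ne', ENNReal.rpow_one]
      _ = (2 * eM * A) * (∫⁻ x, v x ^ q) ^ (1/q) := by ring
  -- conclude
  have hconst : ENNReal.ofReal (2 * M * (∫ y, |α y|)) = 2 * eM * A := by
    rw [hAeq, heMdef, ENNReal.ofReal_mul (by positivity), ENNReal.ofReal_mul (by norm_num)]
    norm_num
  have hfin : eLpNorm K' p volume < ⊤ :=
    lt_of_le_of_lt hmain (ENNReal.mul_lt_top
      (ENNReal.mul_lt_top (ENNReal.mul_lt_top (by norm_num) ofReal_lt_top) hAtop.lt_top) hup.2)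
  constructor
  · refine ⟨hK'm.congr hKK'.symm, ?_⟩
    rw [eLpNorm_congr_ae hKK']
    exact hfin
  · rw [eLpNorm_congr_ae hKK', hconst]
    exact hmain
end

section
/- Let α ∈ L¹(ℝ), w ∈ C²(ℝ) with w(0) = 0, and let u : ℝ → ℝ be continuously differentiable with u and u' bounded. Then the function (Ku)(x) = ∫_ℝ α(y − x) w(u(y) − u(x)) dy is differentiable with derivative (Ku)'(x) = ∫_ℝ α(y − x) w'(u(y) − u(x)) (u'(y) − u'(x)) dy, and ‖(Ku)'‖_∞ ≤ 2 M(‖u‖_∞) ‖α‖_{L¹} ‖u'‖_∞, where M(R) = max_{|η| ≤ 2R} |w'(η)|. -/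
open Set MeasureTheory

theorem stmt5 (α w u : ℝ → ℝ) (hα : Integrable α)
    (hw : ContDiff ℝ 2 w) (hw0 : w 0 = 0)
    (hu : ContDiff ℝ 1 u)
    (hub : BddAbove (range fun x => |u x|))
    (hub' : BddAbove (range fun x => |deriv u x|)) :
    (∀ x : ℝ, HasDerivAt (fun z => ∫ y, α (y - z) * w (u y - u z))
        (∫ y, α (y - x) * (deriv w (u y - u x) * (deriv u y - deriv u x))) x) ∧
    ∀ x : ℝ, |∫ y, α (y - x) * (deriv w (u y - u x) * (deriv u y - deriv u x))| ≤
      2 * Mmax w (⨆ z, |u z|) * (∫ y, |α y|) * (⨆ z, |deriv u z|) := by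
  have hu_diff : Differentiable ℝ u := hu.differentiable one_ne_zero
  have hu_cont : Continuous u := hu_diff.continuous
  have hu'_cont : Continuous (deriv u) := hu.continuous_deriv le_rfl
  have hw_diff : Differentiable ℝ w := hw.differentiable two_ne_zero
  have hw_cont : Continuous w := hw_diff.continuous
  have hw'_cont : Continuous (deriv w) := hw.continuous_deriv one_le_two
  set R := ⨆ z, |u z| with hRdef
  set C := ⨆ z, |deriv u z| with hCdef
  have hR : ∀ z, |u z| ≤ R := fun z => le_ciSup hub z
  have hC : ∀ z, |deriv u z| ≤ C := fun z => le_ciSup hub' z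
  have hR0 : (0:ℝ) ≤ R := le_trans (abs_nonneg _) (hR 0)
  have hC0 : (0:ℝ) ≤ C := le_trans (abs_nonneg _) (hC 0)
  set M := Mmax w R with hMdef
  have hIcc : IsCompact (Icc (-(2*R)) (2*R)) := isCompact_Icc
  have himg : IsCompact ((fun η => |deriv w η|) '' Icc (-(2*R)) (2*R)) :=
    hIcc.image hw'_cont.abs
  have hM : ∀ η : ℝ, |η| ≤ 2*R → |deriv w η| ≤ M := by
    intro η hη
    exact le_csSup himg.bddAbove ⟨η, mem_Icc.mpr (abs_le.mp hη), rfl⟩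
  have hM0 : (0:ℝ) ≤ M :=
    le_trans (abs_nonneg (deriv w 0)) (hM 0 (by simpa using by positivity))
  have hsub2R : ∀ a b : ℝ, |u a - u b| ≤ 2*R := by
    intro a b
    calc |u a - u b| ≤ |u a| + |u b| := abs_sub _ _
    _ ≤ R + R := add_le_add (hR a) (hR b)
    _ = 2*R := by ring
  have hsub2C : ∀ a b : ℝ, |deriv u a - deriv u b| ≤ 2*C := by
    intro a b
    calc |deriv u a - deriv u b| ≤ |deriv u a| + |deriv u b| := abs_sub _ _
    _ ≤ C + C := add_le_add (hC a) (hC b)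
    _ = 2*C := by ring
  -- key pointwise derivative
  have hkey : ∀ t z : ℝ, HasDerivAt (fun z => α t * w (u (t+z) - u z))
      (α t * (deriv w (u (t+z) - u z) * (deriv u (t+z) - deriv u z))) z := by
    intro t z
    have h1 : HasDerivAt (fun z => u (t+z)) (deriv u (t+z)) z := by
      have := (hu_diff (t+z)).hasDerivAt.comp z ((hasDerivAt_id z).const_add t)
      simpa [Function.comp_def] using this
    have h2 : HasDerivAt (fun z => u (t+z) - u z) (deriv u (t+z) - deriv u z) z :=
      h1.sub (hu_diff z).hasDerivAt
    have h3 : HasDerivAt (fun z => w (u (t+z) - u z))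
        (deriv w (u (t+z) - u z) * (deriv u (t+z) - deriv u z)) z :=
      (hw_diff _).hasDerivAt.comp z h2
    exact h3.const_mul (α t)
  -- change of variables
  have hcv1 : ∀ z : ℝ, (∫ y, α (y - z) * w (u y - u z))
      = ∫ t, α t * w (u (t+z) - u z) := by
    intro z
    have := integral_sub_right_eq_self (μ := volume) (fun t => α t * w (u (t + z) - u z)) z
    rw [← this]
    congr 1; funext y; simp
  have hcv2 : ∀ z : ℝ, (∫ y, α (y - z) * (deriv w (u y - u z) * (deriv u y - deriv u z)))
      = ∫ t, α t * (deriv w (u (t+z) - u z) * (deriv u (t+z) - deriv u z)) := by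
    intro z
    have := integral_sub_right_eq_self (μ := volume)
      (fun t => α t * (deriv w (u (t + z) - u z) * (deriv u (t + z) - deriv u z))) z
    rw [← this]
    congr 1; funext y; simp
  -- measurability
  have hmeasF : ∀ z : ℝ, AEStronglyMeasurable (fun t => α t * w (u (t+z) - u z)) volume := by
    intro z
    exact hα.aestronglyMeasurable.mul
      ((hw_cont.comp ((hu_cont.comp (continuous_id.add continuous_const)).sub
        continuous_const)).aestronglyMeasurable)
  have hmeasF' : ∀ z : ℝ, AEStronglyMeasurable
      (fun t => α t * (deriv w (u (t+z) - u z) * (deriv u (t+z) - deriv u z))) volume := by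
    intro z
    refine hα.aestronglyMeasurable.mul (Continuous.aestronglyMeasurable ?_)
    exact ((hw'_cont.comp ((hu_cont.comp (continuous_id.add continuous_const)).sub
      continuous_const)).mul ((hu'_cont.comp (continuous_id.add continuous_const)).sub
      continuous_const))
  -- integrability of F z
  obtain ⟨Cw, hCw⟩ := hIcc.exists_bound_of_continuousOn hw_cont.continuousOn
  have hintF : ∀ z : ℝ, Integrable (fun t => α t * w (u (t+z) - u z)) := by
    intro z
    refine (hα.norm.mul_const Cw).mono' (hmeasF z) (ae_of_all _ fun t => ?_)
    rw [Real.norm_eq_abs, abs_mul]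
    refine mul_le_mul_of_nonneg_left ?_ (abs_nonneg _)
    have := hCw (u (t+z) - u z) (mem_Icc.mpr (abs_le.mp (hsub2R (t+z) z)))
    simpa [Real.norm_eq_abs] using this
  have hboundInt : Integrable (fun t => |α t| * (M * (2*C))) := hα.norm.mul_const _
  have hbound : ∀ t z : ℝ,
      ‖α t * (deriv w (u (t+z) - u z) * (deriv u (t+z) - deriv u z))‖
        ≤ |α t| * (M * (2*C)) := by
    intro t z
    rw [Real.norm_eq_abs, abs_mul]
    refine mul_le_mul_of_nonneg_left ?_ (abs_nonneg _)
    rw [abs_mul]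
    exact mul_le_mul (hM _ (hsub2R (t+z) z)) (hsub2C (t+z) z) (abs_nonneg _) hM0
  -- main derivative statement
  have hmain : ∀ x : ℝ, HasDerivAt (fun z => ∫ t, α t * w (u (t+z) - u z))
      (∫ t, α t * (deriv w (u (t+x) - u x) * (deriv u (t+x) - deriv u x))) x := by
    intro x
    have := hasDerivAt_integral_of_dominated_loc_of_deriv_le (s := Metric.ball x 1)
      (F := fun z t => α t * w (u (t+z) - u z))
      (F' := fun z t => α t * (deriv w (u (t+z) - u z) * (deriv u (t+z) - deriv u z)))
      (bound := fun t => |α t| * (M * (2*C))) (Metric.ball_mem_nhds x one_pos)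
      (Filter.Eventually.of_forall fun z => hmeasF z) (hintF x) (hmeasF' x)
      (ae_of_all _ fun t z _ => hbound t z) hboundInt
      (ae_of_all _ fun t z _ => hkey t z)
    exact this.2
  constructor
  · intro x
    have heq : (fun z => ∫ y, α (y - z) * w (u y - u z))
        = fun z => ∫ t, α t * w (u (t+z) - u z) := funext fun z => hcv1 z
    rw [heq, hcv2 x]
    exact hmain x
  · intro x
    rw [hcv2 x]
    have h1 : |∫ t, α t * (deriv w (u (t+x) - u x) * (deriv u (t+x) - deriv u x))|
        ≤ ∫ t, |α t| * (M * (2*C)) := by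
      rw [← Real.norm_eq_abs]
      exact norm_integral_le_of_norm_le hboundInt (ae_of_all _ fun t => hbound t x)
    have h2 : (∫ t, |α t| * (M * (2*C))) = (∫ y, |α y|) * (M * (2*C)) :=
      integral_mul_const _ _
    have h3 : (0:ℝ) ≤ ∫ y, |α y| := integral_nonneg fun y => abs_nonneg _
    calc |∫ t, α t * (deriv w (u (t+x) - u x) * (deriv u (t+x) - deriv u x))|
        ≤ (∫ y, |α y|) * (M * (2*C)) := by rw [← h2]; exact h1
      _ = 2 * M * (∫ y, |α y|) * C := by ring
end

section
/- Let α ∈ L¹(ℝ) and suppose w : ℝ → ℝ satisfies the sublinear bound |w(η)| ≤ a|η| + b for all η ∈ ℝ for some constants a, b ≥ 0. Let u : ℝ × [0,T) → ℝ be a bounded continuous solution of u(x,t) = φ(x) + tψ(x) + ∫₀^t (t−τ) ∫_ℝ α(y−x) w(u(y,τ)−u(x,τ)) dy dτ with φ, ψ bounded. Then for all t ∈ [0,T), ‖u(t)‖_∞ ≤ (‖φ‖_∞ + T‖ψ‖_∞ + bT²‖α‖_{L¹}) · e^{2aT‖α‖_{L¹} t}. In particular ‖u(t)‖_∞ does not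 blow up as t → T⁻. -/
open Set MeasureTheory

lemma aux_abs_intInt_le {f g : ℝ → ℝ} {t : ℝ} (ht : 0 ≤ t)
    (hg : IntervalIntegrable g volume 0 t)
    (hfg : ∀ τ ∈ Set.Icc (0:ℝ) t, |f τ| ≤ g τ) :
    |∫ τ in (0:ℝ)..t, f τ| ≤ ∫ τ in (0:ℝ)..t, g τ := by
  by_cases hf : IntervalIntegrable f volume 0 t
  · calc |∫ τ in (0:ℝ)..t, f τ| ≤ ∫ τ in (0:ℝ)..t, |f τ| :=
          intervalIntegral.abs_integral_le_integral_abs ht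
      _ ≤ ∫ τ in (0:ℝ)..t, g τ :=
          intervalIntegral.integral_mono_on ht hf.abs hg hfg
  · rw [intervalIntegral.integral_undef hf, abs_zero]
    exact intervalIntegral.integral_nonneg ht fun τ hτ => (abs_nonneg _).trans (hfg τ hτ)

lemma aux_int_pow (k : ℕ) (K t : ℝ) :
    K * ∫ τ in (0:ℝ)..t, (K*τ)^k / (Nat.factorial k : ℝ)
      = (K*t)^(k+1) / (Nat.factorial (k+1) : ℝ) := by
  have h1 : ∀ τ : ℝ, (K*τ)^k / (Nat.factorial k : ℝ) = (K^k / (Nat.factorial k : ℝ)) * τ^k := by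
    intro τ; rw [mul_pow]; ring
  simp only [h1]
  rw [intervalIntegral.integral_const_mul, integral_pow]
  have hk : (Nat.factorial k : ℝ) ≠ 0 := Nat.cast_ne_zero.2 (Nat.factorial_ne_zero k)
  have hk1 : ((k:ℝ) + 1) ≠ 0 := by positivity
  rw [Nat.factorial_succ]
  push_cast
  field_simp
  ring

theorem stmt15 (α w : ℝ → ℝ) (hα : Integrable α) (hw : Continuous w)
    (a b : ℝ) (ha : 0 ≤ a) (hb : 0 ≤ b)
    (hsub : ∀ η : ℝ, |w η| ≤ a * |η| + b)
    (T : ℝ) (hT : 0 < T) (φ ψ : ℝ → ℝ)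
    (hφ : BddAbove (range fun x => |φ x|)) (hψ : BddAbove (range fun x => |ψ x|))
    (u : ℝ → ℝ → ℝ)
    (hcont : ∀ t ∈ Ico (0:ℝ) T, Continuous (u t))
    (hbdd : ∃ B : ℝ, ∀ t ∈ Ico (0:ℝ) T, ∀ x, |u t x| ≤ B)
    (hsol : ∀ t ∈ Ico (0:ℝ) T, ∀ x : ℝ,
      u t x = φ x + t * ψ x +
        ∫ τ in (0:ℝ)..t, (t - τ) * ∫ y : ℝ, α (y - x) * w (u τ y - u τ x)) :
    ∀ t ∈ Ico (0:ℝ) T,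
      (⨆ x, |u t x|) ≤
        ((⨆ x, |φ x|) + T * (⨆ x, |ψ x|) + b * T^2 * ∫ y, |α y|) *
          Real.exp (2 * a * T * (∫ y, |α y|) * t) := by
  set A : ℝ := ∫ y, |α y| with hA_def
  have hA : 0 ≤ A := integral_nonneg fun y => abs_nonneg _
  set Cφ : ℝ := ⨆ x, |φ x| with hCφ_def
  set Cψ : ℝ := ⨆ x, |ψ x| with hCψ_def
  have hCφ : ∀ x, |φ x| ≤ Cφ := fun x => le_ciSup hφ x
  have hCψ : ∀ x, |ψ x| ≤ Cψ := fun x => le_ciSup hψ x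
  have hCφ0 : 0 ≤ Cφ := (abs_nonneg _).trans (hCφ 0)
  have hCψ0 : 0 ≤ Cψ := (abs_nonneg _).trans (hCψ 0)
  obtain ⟨B, hB⟩ := hbdd
  have hB0 : 0 ≤ B := (abs_nonneg _).trans (hB 0 ⟨le_refl 0, hT⟩ 0)
  set C : ℝ := Cφ + T * Cψ + b * T^2 * A with hC_def
  set K : ℝ := 2 * a * T * A with hK_def
  have hK0 : 0 ≤ K := by positivity
  -- inner integral bound
  have inner : ∀ τ ∈ Ico (0:ℝ) T, ∀ x : ℝ, ∀ P : ℝ, (∀ y, |u τ y| ≤ P) →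
      |∫ y : ℝ, α (y - x) * w (u τ y - u τ x)| ≤ (2*a*P + b) * A := by
    intro τ hτ x P hP
    have htrans : Integrable (fun y => α (y - x)) := hα.comp_sub_right x
    have hP0 : 0 ≤ P := (abs_nonneg _).trans (hP 0)
    have hwc : Continuous (fun y => w (u τ y - u τ x)) :=
      hw.comp ((hcont τ hτ).sub continuous_const)
    have hwb : ∀ y, |w (u τ y - u τ x)| ≤ 2*a*P + b := by
      intro y
      calc |w (u τ y - u τ x)| ≤ a * |u τ y - u τ x| + b := hsub _
        _ ≤ a * (|u τ y| + |u τ x|) + b := by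
            have := abs_sub (u τ y) (u τ x)
            nlinarith [abs_sub_abs_le_abs_sub (u τ y) (u τ x), abs_sub (u τ y) (u τ x)]
        _ ≤ a * (P + P) + b := by nlinarith [hP y, hP x]
        _ = 2*a*P + b := by ring
    have hint : Integrable (fun y => α (y - x) * w (u τ y - u τ x)) := by
      have := htrans.bdd_mul hwc.aestronglyMeasurable (c := 2*a*P + b) (Filter.Eventually.of_forall fun y => by
        simpa [Real.norm_eq_abs] using hwb y)
      simpa [mul_comm] using this
    calc |∫ y : ℝ, α (y - x) * w (u τ y - u τ x)|
        ≤ ∫ y : ℝ, |α (y - x)| * |w (u τ y - u τ x)| := by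
          simpa [Real.norm_eq_abs, abs_mul] using
            norm_integral_le_integral_norm (fun y => α (y - x) * w (u τ y - u τ x))
      _ ≤ ∫ y : ℝ, |α (y - x)| * (2*a*P + b) := by
          have hIabs : Integrable (fun y => |α (y - x)| * |w (u τ y - u τ x)|) := by
            simpa [abs_mul] using hint.abs
          exact integral_mono hIabs (htrans.abs.mul_const _)
            (fun y => mul_le_mul_of_nonneg_left (hwb y) (abs_nonneg _))
      _ = (2*a*P + b) * A := by
          rw [integral_mul_const]
          rw [hA_def]
          rw [mul_comm]
          congr 1
          exact integral_sub_right_eq_self (fun y => |α y|) x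
  -- series bound function
  set S : ℕ → ℝ → ℝ := fun n t =>
    C * (∑ k ∈ Finset.range n, (K*t)^k / (Nat.factorial k : ℝ))
      + B * ((K*t)^n / (Nat.factorial n : ℝ)) with hS_def
  have hpk : ∀ k : ℕ, Continuous fun τ : ℝ => (K*τ)^k / (Nat.factorial k : ℝ) :=
    fun k => ((continuous_const.mul continuous_id).pow k).div_const _
  have hScont : ∀ n, Continuous (S n) := by
    intro n
    apply Continuous.add
    · exact continuous_const.mul (continuous_finset_sum _ fun k _ => hpk k)
    · exact continuous_const.mul (hpk n)
  -- main induction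
  have main : ∀ n : ℕ, ∀ t ∈ Ico (0:ℝ) T, ∀ x : ℝ, |u t x| ≤ S n t := by
    intro n
    induction n with
    | zero =>
      intro t ht x
      have hS0 : S 0 t = B := by simp [hS_def]
      rw [hS0]; exact hB t ht x
    | succ n ih =>
      intro t ht x
      obtain ⟨ht0, htT⟩ := ht
      have htT' : t ≤ T := le_of_lt htT
      have hSnonneg : ∀ τ ∈ Ico (0:ℝ) T, 0 ≤ S n τ :=
        fun τ hτ => (abs_nonneg _).trans (ih τ hτ 0)
      rw [hsol t ⟨ht0, htT⟩ x]
      have hbound : |∫ τ in (0:ℝ)..t, (t - τ) * ∫ y : ℝ, α (y - x) * w (u τ y - u τ x)|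
          ≤ ∫ τ in (0:ℝ)..t, (K * S n τ + T * b * A) := by
        apply aux_abs_intInt_le ht0
        · exact ((continuous_const.mul (hScont n)).add continuous_const).intervalIntegrable 0 t
        · intro τ hτ
          have hτT : τ ∈ Ico (0:ℝ) T := ⟨hτ.1, lt_of_le_of_lt hτ.2 htT⟩
          have h1 := inner τ hτT x (S n τ) (fun y => ih τ hτT y)
          have h2 : 0 ≤ (2*a*(S n τ) + b) * A := by
            have := hSnonneg τ hτT; positivity
          rw [abs_mul]
          calc |t - τ| * |∫ y : ℝ, α (y - x) * w (u τ y - u τ x)|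
              ≤ T * ((2*a*(S n τ) + b) * A) := by
                apply mul_le_mul _ h1 (abs_nonneg _) (le_of_lt hT)
                rw [abs_of_nonneg (by linarith [hτ.2] : (0:ℝ) ≤ t - τ)]
                linarith [hτ.1]
            _ = K * S n τ + T * b * A := by rw [hK_def]; ring
      -- compute the integral of the bound
      have hcomp : ∫ τ in (0:ℝ)..t, (K * S n τ + T * b * A)
          = (C * ∑ k ∈ Finset.range n, (K*t)^(k+1) / (Nat.factorial (k+1) : ℝ)
              + B * ((K*t)^(n+1) / (Nat.factorial (n+1) : ℝ))) + T * b * A * t := by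
        rw [intervalIntegral.integral_add (f := fun τ => K * S n τ) (g := fun _ => T * b * A)
            ((continuous_const.mul (hScont n) : Continuous fun τ => K * S n τ).intervalIntegrable 0 t)
            (intervalIntegrable_const)]
        rw [intervalIntegral.integral_const]
        congr 1
        · rw [intervalIntegral.integral_const_mul]
          simp only [hS_def]
          rw [intervalIntegral.integral_add (f := fun τ => C * ∑ k ∈ Finset.range n, (K*τ)^k / (Nat.factorial k : ℝ)) (g := fun τ => B * ((K*τ)^n / (Nat.factorial n : ℝ)))
              ((continuous_const.mul (continuous_finset_sum _ fun k _ => hpk k) : Continuous fun τ => C * ∑ k ∈ Finset.range n, (K*τ)^k / (Nat.factorial k : ℝ)).intervalIntegrable 0 t)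
              ((continuous_const.mul (hpk n) : Continuous fun τ => B * ((K*τ)^n / (Nat.factorial n : ℝ))).intervalIntegrable 0 t)]
          rw [intervalIntegral.integral_const_mul, intervalIntegral.integral_const_mul]
          rw [intervalIntegral.integral_finset_sum
              (fun k _ => (hpk k).intervalIntegrable 0 t)]
          rw [mul_add]
          congr 1
          · rw [← mul_assoc, mul_comm K C, mul_assoc, Finset.mul_sum]
            congr 1
            exact Finset.sum_congr rfl fun k _ => aux_int_pow k K t
          · rw [← mul_assoc, mul_comm K B, mul_assoc, aux_int_pow]
        · rw [sub_zero, smul_eq_mul]; ring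
      have hphi : |φ x + t * ψ x| ≤ Cφ + T * Cψ := by
        calc |φ x + t * ψ x| ≤ |φ x| + |t| * |ψ x| := by
              rw [← abs_mul]; exact abs_add_le _ _
          _ ≤ Cφ + T * Cψ := by
              have := hCψ x
              have ht' : |t| ≤ T := by rw [abs_of_nonneg ht0]; exact htT'
              nlinarith [hCφ x, hCψ x, abs_nonneg (ψ x)]
      calc |φ x + t * ψ x + ∫ τ in (0:ℝ)..t, (t - τ) * ∫ y : ℝ, α (y - x) * w (u τ y - u τ x)|
          ≤ |φ x + t * ψ x| + |∫ τ in (0:ℝ)..t, (t - τ) * ∫ y : ℝ, α (y - x) * w (u τ y - u τ x)| :=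
            abs_add_le _ _
        _ ≤ (Cφ + T * Cψ) + ((C * ∑ k ∈ Finset.range n, (K*t)^(k+1) / (Nat.factorial (k+1) : ℝ)
              + B * ((K*t)^(n+1) / (Nat.factorial (n+1) : ℝ))) + T * b * A * t) := by
            rw [← hcomp]; exact add_le_add hphi hbound
        _ ≤ C + (C * ∑ k ∈ Finset.range n, (K*t)^(k+1) / (Nat.factorial (k+1) : ℝ)
              + B * ((K*t)^(n+1) / (Nat.factorial (n+1) : ℝ))) := by
            have h5 : T * b * A * t ≤ b * T^2 * A := by
              have h6 := mul_le_mul_of_nonneg_left htT' (show (0:ℝ) ≤ T*b*A by positivity)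
              nlinarith [h6]
            have : Cφ + T * Cψ + T * b * A * t ≤ C := by
              rw [hC_def]; linarith
            linarith
        _ = S (n+1) t := by
            simp only [hS_def]
            rw [Finset.sum_range_succ']
            simp only [pow_zero, Nat.factorial_zero, Nat.cast_one]
            ring
  -- pass to the limit
  have limit : ∀ t ∈ Ico (0:ℝ) T, ∀ x : ℝ, |u t x| ≤ C * Real.exp (K * t) := by
    intro t ht x
    have hexp : Filter.Tendsto (fun n => ∑ k ∈ Finset.range n, (K*t)^k / (Nat.factorial k : ℝ))
        Filter.atTop (nhds (Real.exp (K*t))) := by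
      have := (NormedSpace.expSeries_div_summable (K*t)).hasSum.tendsto_sum_nat
      rw [Real.exp_eq_exp_ℝ, NormedSpace.exp_eq_tsum_div]
      exact this
    have hzero : Filter.Tendsto (fun n => (K*t)^n / (Nat.factorial n : ℝ))
        Filter.atTop (nhds 0) := FloorSemiring.tendsto_pow_div_factorial_atTop (K*t)
    have htend : Filter.Tendsto (fun n => S n t) Filter.atTop (nhds (C * Real.exp (K*t) + B * 0)) :=
      ((hexp.const_mul C).add (hzero.const_mul B))
    have := ge_of_tendsto htend (Filter.Eventually.of_forall fun n => main n t ht x)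
    simpa using this
  intro t ht
  have : (⨆ x, |u t x|) ≤ C * Real.exp (K * t) :=
    ciSup_le (fun x => limit t ht x)
  calc (⨆ x, |u t x|) ≤ C * Real.exp (K * t) := this
    _ = (Cφ + T * Cψ + b * T^2 * A) * Real.exp (2 * a * T * A * t) := by rw [hC_def, hK_def]
end

section
/- Suppose H(t) = ‖u(t)‖_{L²}² + b(t+t₀)² where u : [0,∞) → L²(ℝ) is C², b > 0, t₀ > 0. If 2⟨u(t), u_tt(t)⟩ ≥ 4(1+2ν)((1/2)‖u_t(t)‖₂² − E₀) for all t, with E₀ < 0 and 0 < b ≤ −2E₀, then H''(t)H(t) − (1+ν)(H'(t))² ≥ 0 for all t ≥ 0. -/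
open Set
open scoped RealInnerProductSpace

theorem stmt18 (E : Type*) [NormedAddCommGroup E] [InnerProductSpace ℝ E]
    (u ut utt : ℝ → E)
    (hder1 : ∀ t ≥ (0:ℝ), HasDerivAt u (ut t) t)
    (hder2 : ∀ t ≥ (0:ℝ), HasDerivAt ut (utt t) t)
    (ν b t₀ E₀ : ℝ) (hν : 0 < ν) (hE₀ : E₀ < 0) (hb : 0 < b) (hb' : b ≤ -2 * E₀)
    (ht₀ : 0 < t₀)
    (hineq : ∀ t ≥ (0:ℝ), 2 * ⟪u t, utt t⟫ ≥ 4 * (1 + 2*ν) * ((1/2) * ‖ut t‖^2 - E₀)) :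
    ∀ t ≥ (0:ℝ),
      (2 * ‖ut t‖^2 + 2 * ⟪u t, utt t⟫ + 2*b) * (‖u t‖^2 + b * (t + t₀)^2) -
        (1 + ν) * (2 * ⟪u t, ut t⟫ + 2 * b * (t + t₀))^2 ≥ 0 := by
  intro t ht
  have hq := hineq t ht
  have hs : 0 < t + t₀ := by linarith
  set s := t + t₀
  set P := ⟪u t, ut t⟫
  set Q := ⟪u t, utt t⟫
  have hcs : |P| ≤ ‖u t‖ * ‖ut t‖ := abs_real_inner_le_norm _ _
  -- Cauchy–Schwarz in ℝ²: (P + b s)² ≤ (‖u‖² + b s²)(‖ut‖² + b)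
  have key1 : (P + b * s)^2 ≤ (‖u t‖^2 + b * s^2) * (‖ut t‖^2 + b) := by
    have h1 : |P + b * s| ≤ ‖u t‖ * ‖ut t‖ + b * s := by
      calc |P + b * s| ≤ |P| + |b * s| := abs_add_le _ _
        _ = |P| + b * s := by rw [abs_of_pos (mul_pos hb hs)]
        _ ≤ ‖u t‖ * ‖ut t‖ + b * s := by linarith
    have h2 : (P + b * s)^2 ≤ (‖u t‖ * ‖ut t‖ + b * s)^2 := by
      rw [← sq_abs (P + b * s)]
      exact pow_le_pow_left₀ (abs_nonneg _) h1 2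
    nlinarith [mul_nonneg hb.le (sq_nonneg (‖u t‖ - s * ‖ut t‖))]
  -- lower bound on H''
  have key2 : 2 * ‖ut t‖^2 + 2 * Q + 2 * b ≥ 4 * (1 + ν) * (‖ut t‖^2 + b) := by
    nlinarith [mul_nonneg (by linarith : (0:ℝ) ≤ 2 + 4*ν) (by linarith : (0:ℝ) ≤ -2*E₀ - b)]
  have hH : 0 ≤ ‖u t‖^2 + b * s^2 := by positivity
  have key2' : 0 ≤ (‖u t‖^2 + b * s^2) *
      (2 * ‖ut t‖^2 + 2 * Q + 2 * b - 4 * (1 + ν) * (‖ut t‖^2 + b)) :=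
    mul_nonneg hH (by linarith)
  have key1' : (1 + ν) * (P + b * s)^2 ≤ (1 + ν) * ((‖u t‖^2 + b * s^2) * (‖ut t‖^2 + b)) :=
    mul_le_mul_of_nonneg_left key1 (by linarith)
  nlinarith [key2', key1']
end
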